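/- Let C be a cocomplete category and i : Δ ↪ Pos the full inclusion. If G, H : Pos → C are colimit-preserving functors and there is a natural isomorphism i ⋙ G ≅ i ⋙ H, then G ≅ H. -/

import Mathlib

open CategoryTheory Limits

universe v u

/-- The full inclusion `i : Δ ↪ Pos` of the simplex category into the category of
partially ordered sets, sending `[n]` to the poset `{0, …, n}`. -/
def deltaToPartOrd : SimplexCategory ⥤ PartOrd where
  obj n := PartOrd.of (Fin (n.len + 1))
  map f := PartOrd.ofHom f.toOrderHom

namespace CocontExtAux

/-- Application of a `PartOrd` morphism to an element. -/
def ap {X Y : PartOrd} (f : X ⟶ Y) : X → Y := OrderHom.toFun f.hom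

lemma ap_mono {X Y : PartOrd} (f : X ⟶ Y) {a b : X} (h : a ≤ b) : ap f a ≤ ap f b :=
  OrderHom.monotone f.hom h

lemma ap_comp {X Y Z : PartOrd} (f : X ⟶ Y) (g : Y ⟶ Z) (x : X) :
    ap (f ≫ g) x = ap g (ap f x) := rfl

/-- The comma category of simplices over a poset `X`. -/
abbrev Cma (X : PartOrd) := CostructuredArrow deltaToPartOrd X

/-- The canonical diagram of simplices over `X`. -/
abbrev diag (X : PartOrd) : Cma X ⥤ PartOrd :=
  CostructuredArrow.proj deltaToPartOrd X ⋙ deltaToPartOrd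

/-- The tautological cocone over the diagram of simplices over `X`, with apex `X`. -/
def tautCocone (X : PartOrd) : Cocone (diag X) where
  pt := X
  ι :=
    { app := fun j => j.hom
      naturality := fun _ j' g => by
        simp only [Functor.comp_map, Functor.const_obj_map, Category.comp_id, CostructuredArrow.proj_map]
        exact CostructuredArrow.w g }

/-- The object of `Cma X` given by a point `x : X`, as a map `[0] → X`. -/
def pt0 {X : PartOrd} (x : X) : Cma X :=
  CostructuredArrow.mk (Y := SimplexCategory.mk 0)
    (show deltaToPartOrd.obj (SimplexCategory.mk 0) ⟶ X from PartOrd.ofHom (OrderHom.const _ x))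

lemma key {X : PartOrd} (s : Cocone (diag X)) (j : Cma X) (i : Fin (j.left.len + 1)) :
    ap (s.ι.app (pt0 (ap j.hom i))) (0 : Fin 1) = ap (s.ι.app j) i := by
  have hcomm : deltaToPartOrd.map (SimplexCategory.const (SimplexCategory.mk 0) j.left i) ≫
      j.hom = (pt0 (ap j.hom i)).hom := by
    apply PartOrd.hom_ext
    apply OrderHom.ext
    funext a
    rfl
  have hnat := s.ι.naturality
    (CostructuredArrow.homMk (SimplexCategory.const (SimplexCategory.mk 0) j.left i) hcomm :
      pt0 (ap j.hom i) ⟶ j)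
  have h0 := congrArg (fun (f : (diag X).obj (pt0 (ap j.hom i)) ⟶ s.pt) => ap f (0 : Fin 1)) hnat
  simp only [Functor.const_obj_obj, Functor.const_obj_map, Category.comp_id] at h0
  rw [← h0]
  rfl

/-- The tautological cocone is a colimit: `Δ` is dense in `Pos`. -/
def tautIsColimit (X : PartOrd) : IsColimit (tautCocone X) where
  desc s :=
    PartOrd.ofHom (show X →o s.pt from
    { toFun := fun x => ap (s.ι.app (pt0 x)) (0 : Fin 1)
      monotone' := by
        intro x y hxy
        -- the morphism `[1] → X` sending `0 ↦ x`, `1 ↦ y`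
        let u : deltaToPartOrd.obj (SimplexCategory.mk 1) ⟶ X :=
          PartOrd.ofHom (show Fin 2 →o X from
          { toFun := fun i => if i = 0 then x else y
            monotone' := by
              intro a b hab
              dsimp only
              split_ifs with h1 h2 h3
              · exact le_refl x
              · exact hxy
              · exact absurd (Fin.le_antisymm (h3 ▸ hab) (Fin.zero_le _)) h1
              · exact le_refl y })
        let j : Cma X := CostructuredArrow.mk u
        have hx : ap j.hom (0 : Fin 2) = x := rfl
        have hy : ap j.hom (1 : Fin 2) = y := rfl
        have k0 := key s j (0 : Fin 2)
        have k1 := key s j (1 : Fin 2)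
        rw [hx] at k0
        rw [hy] at k1
        dsimp only
        rw [k0, k1]
        exact ap_mono (s.ι.app j) (by decide : (0 : Fin 2) ≤ 1) })
  fac s j := by
    apply PartOrd.hom_ext
    apply OrderHom.ext
    funext a
    exact key s j a
  uniq s m hm := by
    apply PartOrd.hom_ext
    apply OrderHom.ext
    funext x
    have := congrArg (fun (f : (diag X).obj (pt0 x) ⟶ s.pt) => ap f (0 : Fin 1)) (hm (pt0 x))
    exact this

end CocontExtAux

open CocontExtAux in
/-- Let `C` be a cocomplete category and `i : Δ ↪ Pos` the full
inclusion. If `G, H : Pos → C` are colimit-preserving functors and there is a natural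
isomorphism `i ⋙ G ≅ i ⋙ H`, then `G ≅ H`. -/
theorem cocontinuous_extension_unique
    {C : Type u} [Category.{v} C] [HasColimits C] (G H : PartOrd ⥤ C)
    (hG : ∀ ⦃J : Type⦄ [SmallCategory J] (D : J ⥤ PartOrd) (c : Cocone D),
      Nonempty (IsColimit c) → Nonempty (IsColimit (G.mapCocone c)))
    (hH : ∀ ⦃J : Type⦄ [SmallCategory J] (D : J ⥤ PartOrd) (c : Cocone D),
      Nonempty (IsColimit c) → Nonempty (IsColimit (H.mapCocone c)))
    (e : deltaToPartOrd ⋙ G ≅ deltaToPartOrd ⋙ H) :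
    Nonempty (G ≅ H) := by
  have cG : ∀ X : PartOrd, IsColimit (G.mapCocone (tautCocone X)) :=
    fun X => (hG _ _ ⟨tautIsColimit X⟩).some
  have cH : ∀ X : PartOrd, IsColimit (H.mapCocone (tautCocone X)) :=
    fun X => (hH _ _ ⟨tautIsColimit X⟩).some
  let wiso : ∀ X : PartOrd, diag X ⋙ G ≅ diag X ⋙ H :=
    fun X => Functor.associator _ _ _ ≪≫
      Functor.isoWhiskerLeft (CostructuredArrow.proj deltaToPartOrd X) e ≪≫
      (Functor.associator _ _ _).symm
  have hw : ∀ (Z : PartOrd) (k : Cma Z), (wiso Z).hom.app k = e.hom.app k.left := by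
    intro Z k
    simp [wiso]
    rfl
  refine ⟨NatIso.ofComponents
    (fun X => IsColimit.coconePointsIsoOfNatIso (cG X) (cH X) (wiso X)) ?_⟩
  intro X Y f
  apply (cG X).hom_ext
  intro j
  have hι : ∀ (Z : PartOrd) (k : Cma Z),
      (G.mapCocone (tautCocone Z)).ι.app k = G.map k.hom := fun _ _ => rfl
  have hιH : ∀ (Z : PartOrd) (k : Cma Z),
      (H.mapCocone (tautCocone Z)).ι.app k = H.map k.hom := fun _ _ => rfl
  -- the object of `Cma Y` corresponding to `j` pushed along `f`
  have h1 : (G.mapCocone (tautCocone X)).ι.app j ≫ G.map f =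
      (G.mapCocone (tautCocone Y)).ι.app (CostructuredArrow.mk (j.hom ≫ f)) := by
    rw [hι, hι]
    exact (G.map_comp _ _).symm
  have h2 := IsColimit.comp_coconePointsIsoOfNatIso_hom (cG Y) (cH Y) (wiso Y)
    (CostructuredArrow.mk (j.hom ≫ f))
  have h3 := IsColimit.comp_coconePointsIsoOfNatIso_hom (cG X) (cH X) (wiso X) j
  erw [← Category.assoc, h1, h2, ← Category.assoc, h3]
  erw [hw]
  simp only [hιH, Category.assoc, ← H.map_comp]
  erw [Category.assoc, ← H.map_comp]
  rfl
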